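/- Every equivalence class C ∈ T(n,2)/∼ decomposes uniquely (up to reordering) as a direct sum of irreducible classes, and the map C ↦ λ_C sending C to the multiset of sizes of its irreducible summands is a bijection between T(n,2)/∼ and the set of partitions of n. -/

import Mathlib

open Matrix

/-- `A` and `B` are permutation equivalent. -/
def permEquiv {n : ℕ} (A B : Matrix (Fin n) (Fin n) ℕ) : Prop :=
  ∃ σ τ : Equiv.Perm (Fin n), ∀ i j, B i j = A (σ i) (τ j)

/-- The canonical irreducible element of `T(k,2)/∼`: for `k = 1` it is `(2)`, and for
`k ≥ 2` it is the "path" matrix with `1`s on the first super- and sub-diagonal and `1`s in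
the top-left and bottom-right corners. -/
def pathMat (k : ℕ) : Matrix (Fin k) (Fin k) ℕ := fun i j =>
  (if (i : ℕ) + 1 = (j : ℕ) ∨ (j : ℕ) + 1 = (i : ℕ) then 1 else 0) +
    (if i = j ∧ (i : ℕ) = 0 then 1 else 0) +
    (if i = j ∧ (i : ℕ) + 1 = k then 1 else 0)

/-- The block-diagonal matrix with diagonal blocks `pathMat k` for `k` in the list `L`. -/
def listMat : (L : List ℕ) → Matrix (Fin L.sum) (Fin L.sum) ℕ
  | [] => fun i _ => 0
  | k :: L =>
      (Matrix.fromBlocks (pathMat k) 0 0 (listMat L)).submatrix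
        (finSumFinEquiv.symm ∘ Fin.cast (by simp))
        (finSumFinEquiv.symm ∘ Fin.cast (by simp))

/-- The canonical matrix in `T(n,2)` associated to a partition `μ` of `n`: the
block-diagonal sum of the irreducible matrices `pathMat k` over the parts `k` of `μ`. -/
noncomputable def canonP {n : ℕ} (μ : n.Partition) : Matrix (Fin n) (Fin n) ℕ :=
  (listMat μ.parts.toList).submatrix
    (Fin.cast (by simp [μ.parts_sum]))
    (Fin.cast (by simp [μ.parts_sum]))


/-! ### Auxiliary machinery -/

open Equiv Equiv.Perm

/-- the matrix of an ordered pair of permutations -/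
def pairMat {m : Type*} [DecidableEq m] (α β : Equiv.Perm m) : Matrix m m ℕ :=
  fun i j => (if j = α i then 1 else 0) + (if j = β i then 1 else 0)

variable {m m' : Type*} [DecidableEq m] [DecidableEq m']

/-- the matrix of an ordered pair of permutations -/

lemma pairMat_rowSum [Fintype m] (α β : Equiv.Perm m) (i : m) :
    ∑ j, pairMat α β i j = 2 := by
  simp [pairMat, Finset.sum_add_distrib]

lemma pairMat_colSum [Fintype m] (α β : Equiv.Perm m) (j : m) :
    ∑ i, pairMat α β i j = 2 := by
  have h1 : ∀ (γ : Equiv.Perm m), ∑ i, (if j = γ i then (1:ℕ) else 0) = 1 := by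
    intro γ
    have : ∀ i, (if j = γ i then (1:ℕ) else 0) = if i = γ.symm j then 1 else 0 := by
      intro i
      congr 1
      simp [eq_comm, Equiv.apply_eq_iff_eq_symm_apply, eq_iff_iff]
      constructor
      · rintro rfl; simp
      · rintro rfl; simp
    simp [this]
  simp [pairMat, Finset.sum_add_distrib, h1]

lemma pairMat_transpose (α β : Equiv.Perm m) :
    (pairMat α β)ᵀ = pairMat α⁻¹ β⁻¹ := by
  ext i j
  simp only [transpose_apply, pairMat]
  congr 1 <;> congr 1 <;> simp [eq_iff_iff] <;>
    constructor <;> intro h <;> simp [h, Equiv.Perm.inv_def]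

lemma permEquiv_refl {n : ℕ} (A : Matrix (Fin n) (Fin n) ℕ) : permEquiv A A :=
  ⟨1, 1, fun _ _ => rfl⟩

lemma permEquiv_symm {n : ℕ} {A B : Matrix (Fin n) (Fin n) ℕ} (h : permEquiv A B) :
    permEquiv B A := by
  obtain ⟨σ, τ, h⟩ := h
  exact ⟨σ⁻¹, τ⁻¹, fun i j => by rw [h]; simp⟩

lemma permEquiv_trans {n : ℕ} {A B C : Matrix (Fin n) (Fin n) ℕ}
    (h1 : permEquiv A B) (h2 : permEquiv B C) : permEquiv A C := by
  obtain ⟨σ, τ, h1⟩ := h1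
  obtain ⟨σ', τ', h2⟩ := h2
  exact ⟨σ * σ', τ * τ', fun i j => by rw [h2, h1]; rfl⟩

lemma pairMat_comp {m : Type*} [DecidableEq m] (α β σ τ : Equiv.Perm m) (i j : m) :
    pairMat α β (σ i) (τ j) = pairMat (τ⁻¹ * α * σ) (τ⁻¹ * β * σ) i j := by
  simp only [pairMat, Equiv.Perm.mul_apply]
  congr 1 <;> congr 1 <;> rw [eq_iff_iff, ← Equiv.Perm.eq_inv_iff_eq]

lemma permEquiv_pairMat_form {n : ℕ} {α β : Equiv.Perm (Fin n)} {B : Matrix (Fin n) (Fin n) ℕ}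
    (h : permEquiv (pairMat α β) B) :
    ∃ γ δ : Equiv.Perm (Fin n), B = pairMat γ δ ∧
      (δ⁻¹ * γ).cycleType = (β⁻¹ * α).cycleType := by
  obtain ⟨σ, τ, h⟩ := h
  refine ⟨τ⁻¹ * α * σ, τ⁻¹ * β * σ, ?_, ?_⟩
  · ext i j
    rw [h, pairMat_comp]
  · have : (τ⁻¹ * β * σ)⁻¹ * (τ⁻¹ * α * σ) = σ⁻¹ * (β⁻¹ * α) * σ⁻¹⁻¹ := by group
    rw [this, Equiv.Perm.cycleType_conj]

lemma pairMat_permEquiv_of_isConj {n : ℕ} {α β γ δ : Equiv.Perm (Fin n)}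
    (h : IsConj (β⁻¹ * α) (δ⁻¹ * γ)) : permEquiv (pairMat α β) (pairMat γ δ) := by
  obtain ⟨c, hc⟩ := isConj_iff.mp h
  refine ⟨c⁻¹, β * c⁻¹ * δ⁻¹, fun i j => ?_⟩
  rw [pairMat_comp]
  have hγ : (β * c⁻¹ * δ⁻¹)⁻¹ * α * c⁻¹ = γ := by
    have : δ * (c * (β⁻¹ * α) * c⁻¹) = γ := by rw [hc]; group
    rw [← this]; group
  have hδ : (β * c⁻¹ * δ⁻¹)⁻¹ * β * c⁻¹ = δ := by group
  rw [hγ, hδ]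

lemma exists_perm_le {n : ℕ} {A : Matrix (Fin n) (Fin n) ℕ}
    (hr : ∀ i, ∑ j, A i j = 2) (hc : ∀ j, ∑ i, A i j = 2) :
    ∃ α : Equiv.Perm (Fin n), ∀ i, 0 < A i (α i) := by
  set t : Fin n → Finset (Fin n) := fun i => Finset.univ.filter (fun j => 0 < A i j) with ht
  have hall : ∀ s : Finset (Fin n), s.card ≤ (s.biUnion t).card := by
    intro s
    have key : 2 * s.card ≤ 2 * (s.biUnion t).card := by
      calc 2 * s.card = ∑ i ∈ s, ∑ j, A i j := by
            rw [Finset.sum_congr rfl (fun i _ => hr i)]; simp [mul_comm]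
        _ = ∑ j, ∑ i ∈ s, A i j := Finset.sum_comm
        _ = ∑ j ∈ s.biUnion t, ∑ i ∈ s, A i j := by
            refine (Finset.sum_subset (Finset.subset_univ _) ?_).symm
            intro j _ hj
            refine Finset.sum_eq_zero (fun i hi => ?_)
            by_contra hne
            exact hj (Finset.mem_biUnion.mpr ⟨i, hi, by simp [ht, Nat.pos_of_ne_zero hne]⟩)
        _ ≤ ∑ j ∈ s.biUnion t, 2 := by
            refine Finset.sum_le_sum (fun j _ => ?_)
            rw [← hc j]
            exact Finset.sum_le_sum_of_subset (Finset.subset_univ s)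
        _ = 2 * (s.biUnion t).card := by simp [mul_comm]
    omega
  obtain ⟨f, hfinj, hf⟩ := (Finset.all_card_le_biUnion_card_iff_exists_injective t).mp hall
  refine ⟨Equiv.ofBijective f ((Fintype.bijective_iff_injective_and_card f).mpr ⟨hfinj, rfl⟩),
    fun i => ?_⟩
  have := hf i
  simp only [ht, Finset.mem_filter] at this
  exact this.2

lemma exists_pairMat {n : ℕ} {A : Matrix (Fin n) (Fin n) ℕ}
    (hr : ∀ i, ∑ j, A i j = 2) (hc : ∀ j, ∑ i, A i j = 2) :
    ∃ α β : Equiv.Perm (Fin n), A = pairMat α β := by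
  obtain ⟨α, hα⟩ := exists_perm_le hr hc
  set B : Matrix (Fin n) (Fin n) ℕ := fun i j => A i j - if j = α i then 1 else 0 with hB
  have hBA : ∀ i j, B i j + (if j = α i then 1 else 0) = A i j := by
    intro i j
    by_cases h : j = α i
    · subst h
      have := hα i
      simp only [hB, if_pos rfl, if_pos trivial]
      omega
    · simp [hB, h]
  have ite1 : ∀ j₀ : Fin n, ∑ j, (if j = j₀ then (1:ℕ) else 0) = 1 := by
    intro j₀; simp
  have hBr : ∀ i, ∑ j, B i j = 1 := by
    intro i
    have h2 : ∑ j, (B i j + if j = α i then 1 else 0) = 2 := by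
      rw [Finset.sum_congr rfl (fun j _ => hBA i j)]; exact hr i
    rw [Finset.sum_add_distrib, ite1 (α i)] at h2
    omega
  have hBc : ∀ j, ∑ i, B i j = 1 := by
    intro j
    have h1 : ∑ i, (if j = α i then (1:ℕ) else 0) = 1 := by
      have he : ∀ i, (if j = α i then (1:ℕ) else 0) = if i = α.symm j then 1 else 0 := by
        intro i; congr 1; rw [eq_iff_iff]
        constructor
        · rintro rfl; simp
        · rintro rfl; simp
      simp only [he]; simp
    have h2 : ∑ i, (B i j + if j = α i then 1 else 0) = 2 := by
      rw [Finset.sum_congr rfl (fun i _ => hBA i j)]; exact hc j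
    rw [Finset.sum_add_distrib, h1] at h2
    omega
  have pair_le : ∀ (f : Fin n → ℕ) (a b : Fin n), a ≠ b → f a + f b ≤ ∑ x, f x := by
    intro f a b hab
    have : ∑ x ∈ ({a, b} : Finset (Fin n)), f x ≤ ∑ x, f x :=
      Finset.sum_le_sum_of_subset (Finset.subset_univ _)
    rwa [Finset.sum_pair hab] at this
  have hex : ∀ i, ∃ j, 0 < B i j := by
    intro i
    obtain ⟨j, hj⟩ := Finset.exists_ne_zero_of_sum_ne_zero (by rw [hBr i]; omega :
      ∑ j, B i j ≠ 0)
    exact ⟨j, Nat.pos_of_ne_zero hj.2⟩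
  classical
  set g : Fin n → Fin n := fun i => (hex i).choose with hg
  have hg1 : ∀ i, 0 < B i (g i) := fun i => (hex i).choose_spec
  have hginj : Function.Injective g := by
    intro a b hab
    by_contra hne
    have h0 : B a (g a) + B b (g a) ≤ ∑ x, B x (g a) := pair_le (fun i => B i (g a)) a b hne
    rw [hBc (g a)] at h0
    have h1 := hg1 a
    have h2 := hg1 b
    rw [← hab] at h2
    omega
  refine ⟨α, Equiv.ofBijective g ((Fintype.bijective_iff_injective_and_card g).mpr
    ⟨hginj, rfl⟩), ?_⟩
  have hBg : ∀ i j, B i j = if j = g i then 1 else 0 := by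
    intro i j
    by_cases h : j = g i
    · subst h
      have h1 := hg1 i
      have h2 : B i (g i) ≤ ∑ j', B i j' := Finset.single_le_sum (fun _ _ => Nat.zero_le _)
        (Finset.mem_univ (g i))
      rw [hBr i] at h2
      rw [if_pos rfl]
      omega
    · simp only [if_neg h]
      have h0 : B i j + B i (g i) ≤ ∑ x, B i x := pair_le (fun j' => B i j') j (g i) h
      rw [hBr i] at h0
      have := hg1 i
      omega
  ext i j
  rw [← hBA i j, hBg i j]
  simp only [pairMat]
  rw [add_comm]
  rfl

lemma ind_pair_eq {m : Type*} [DecidableEq m] {a b c d : m}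
    (e : ∀ j, (if j = a then (1:ℕ) else 0) + (if j = b then 1 else 0) =
      (if j = c then 1 else 0) + (if j = d then 1 else 0)) :
    (c = a ∧ d = b) ∨ (c = b ∧ d = a) := by
  by_cases h1 : c = a
  · by_cases h2 : d = b
    · exact Or.inl ⟨h1, h2⟩
    · right
      have hd := e d
      rw [if_pos rfl, if_neg h2] at hd
      have hda : d = a := by
        by_contra hh; rw [if_neg hh] at hd; omega
      refine ⟨?_, hda⟩
      have hb := e b
      rw [if_pos rfl, if_neg (fun hh => h2 hh.symm : ¬ b = d)] at hb
      have : b = c := by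
        by_contra hh; rw [if_neg hh] at hb; omega
      exact this.symm
  · right
    have hc := e c
    rw [if_pos rfl, if_neg h1] at hc
    have hcb : c = b := by
      by_contra hh; rw [if_neg hh] at hc; omega
    refine ⟨hcb, ?_⟩
    have ha := e a
    rw [if_pos rfl, if_neg (fun hh => h1 hh.symm : ¬ a = c)] at ha
    have : a = d := by
      by_contra hh; rw [if_neg hh] at ha; omega
    exact this.symm

lemma pairMat_cycleType_unique {m : Type*} [Fintype m] [DecidableEq m]
    {α β γ δ : Equiv.Perm m} (h : pairMat α β = pairMat γ δ) :
    (δ⁻¹ * γ).cycleType = (β⁻¹ * α).cycleType := by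
  classical
  have disj : ∀ i, (γ i = α i ∧ δ i = β i) ∨ (γ i = β i ∧ δ i = α i) := by
    intro i
    exact ind_pair_eq (fun j => congrFun (congrFun h i) j)
  set π : Equiv.Perm m := β⁻¹ * α with hπ
  set ρ : Equiv.Perm m := δ⁻¹ * γ with hρ
  have hπa : ∀ i, π i = β⁻¹ (α i) := fun i => rfl
  have hρa : ∀ i, ρ i = δ⁻¹ (γ i) := fun i => rfl
  have hπfix : ∀ i, π i = i ↔ α i = β i := by
    intro i
    rw [hπa]
    constructor
    · intro hh
      have := congrArg β hh
      simpa using this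
    · intro hh
      rw [hh]
      simp
  set p : m → Prop := fun i => (γ i = α i ∧ δ i = β i) ∨ π i = i with hpdef
  -- forward closure
  have hclos : ∀ i, p i → p (π i) := by
    intro i hi
    by_cases hfix : π i = i
    · rwa [hfix]
    · have hab : ¬ α i = β i := fun hh => hfix ((hπfix i).mpr hh)
      rcases hi with ⟨h1, h2⟩ | hx
      · -- know γ i = α i, δ i = β i, π i ≠ i
        have hβπ : β (π i) = α i := by rw [hπa]; simp
        rcases disj (π i) with hgood | ⟨hg, _⟩
        · exact Or.inl hgood
        · exfalso
          have : γ (π i) = γ i := by rw [hg, hβπ, h1]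
          exact hfix (γ.injective this)
      · exact absurd hx hfix
  have hmem : ∀ i, p i ↔ p (π i) := by
    intro i
    constructor
    · exact hclos i
    · intro hpi
      set s : Finset m := Finset.univ.filter p with hs
      have hsub : Finset.image π s ⊆ s := by
        intro x hx
        obtain ⟨y, hy, rfl⟩ := Finset.mem_image.mp hx
        simp only [hs, Finset.mem_filter] at hy ⊢
        exact ⟨Finset.mem_univ _, hclos y hy.2⟩
      have himg : Finset.image π s = s :=
        Finset.eq_of_subset_of_card_le hsub
          (le_of_eq (Finset.card_image_of_injective s π.injective).symm)
      have : π i ∈ s := by simp [hs, hpi]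
      rw [← himg] at this
      obtain ⟨y, hy, hyx⟩ := Finset.mem_image.mp this
      have : y = i := π.injective hyx
      subst this
      exact (Finset.mem_filter.mp hy).2
  have hmeminv : ∀ i, p (π⁻¹ i) ↔ p i := by
    intro i
    have := hmem (π⁻¹ i)
    rwa [show π (π⁻¹ i) = i from π.apply_symm_apply i] at this
  -- ρ agrees with π on p
  have hρp : ∀ i, p i → ρ i = π i := by
    intro i hi
    by_cases hfix : π i = i
    · have hab : α i = β i := (hπfix i).mp hfix
      rw [hfix, hρa]
      rcases disj i with ⟨h1, h2⟩ | ⟨h1, h2⟩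
      · rw [h1, hab, ← h2]; simp
      · rw [h1, ← hab, ← h2]; simp
    · have hi' : γ i = α i ∧ δ i = β i := by
        rcases hi with hh | hh
        · exact hh
        · exact absurd hh hfix
      have hpj : p (π i) := hclos i hi
      have hβπ : β (π i) = α i := by rw [hπa]; simp
      have hδj : δ (π i) = α i := by
        rcases disj (π i) with ⟨_, h2⟩ | ⟨h1, h2⟩
        · rw [h2, hβπ]
        · rcases hpj with ⟨_, h2'⟩ | hfj
          · rw [h2', hβπ]
          · have hab' : α (π i) = β (π i) := (hπfix (π i)).mp hfj
            rw [h2, hab', hβπ]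
      rw [hρa, hi'.1, ← hδj]
      simp
  -- ρ agrees with π⁻¹ off p
  have hρp' : ∀ i, ¬ p i → ρ i = π⁻¹ i := by
    intro i hi
    have hbad : γ i = β i ∧ δ i = α i := by
      rcases disj i with ⟨h1, h2⟩ | hh
      · exfalso
        exact hi (Or.inl ⟨h1, h2⟩)
      · exact hh
    have hj : ¬ p (π⁻¹ i) := fun hh => hi ((hmeminv i).mp hh)
    have hbadj : γ (π⁻¹ i) = β (π⁻¹ i) ∧ δ (π⁻¹ i) = α (π⁻¹ i) := by
      rcases disj (π⁻¹ i) with ⟨h1, h2⟩ | hh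
      · exact absurd (Or.inl ⟨h1, h2⟩) hj
      · exact hh
    have hαj : α (π⁻¹ i) = β i := by
      have : π (π⁻¹ i) = i := π.apply_symm_apply i
      rw [hπa] at this
      have := congrArg β this
      simpa using this
    rw [hρa, hbad.1, ← hαj, ← hbadj.2]
    simp
  -- now decompose into disjoint pieces supported on `p` and `¬ p`
  have hmemρ : ∀ i, p i ↔ p (ρ i) := by
    intro i
    by_cases hi : p i
    · rw [hρp i hi]
      simp only [hi, true_iff]
      exact hclos i hi
    · rw [hρp' i hi]
      simp only [hi, false_iff]
      exact fun hh => hi ((hmeminv i).mp hh)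
  have hmem' : ∀ i, ¬ p i ↔ ¬ p (π i) := fun i => not_congr (hmem i)
  have hmemρ' : ∀ i, ¬ p i ↔ ¬ p (ρ i) := fun i => not_congr (hmemρ i)
  set π₁ : Equiv.Perm m := Equiv.Perm.ofSubtype (π.subtypePerm (fun i => (hmem i).symm)) with hπ₁
  set π₂ : Equiv.Perm m := Equiv.Perm.ofSubtype (π.subtypePerm (p := fun x => ¬ p x) (fun i => (hmem' i).symm)) with hπ₂
  set ρ₁ : Equiv.Perm m := Equiv.Perm.ofSubtype (ρ.subtypePerm (fun i => (hmemρ i).symm)) with hρ₁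
  set ρ₂ : Equiv.Perm m := Equiv.Perm.ofSubtype (ρ.subtypePerm (p := fun x => ¬ p x) (fun i => (hmemρ' i).symm)) with hρ₂
  have hπ₁a : ∀ i, p i → π₁ i = π i := fun i hi =>
    Equiv.Perm.ofSubtype_apply_of_mem _ hi
  have hπ₁a' : ∀ i, ¬ p i → π₁ i = i := fun i hi =>
    Equiv.Perm.ofSubtype_apply_of_not_mem _ hi
  have hπ₂a : ∀ i, ¬ p i → π₂ i = π i := fun i hi =>
    Equiv.Perm.ofSubtype_apply_of_mem (π.subtypePerm (p := fun x => ¬ p x) (fun i => (hmem' i).symm)) hi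
  have hπ₂a' : ∀ i, p i → π₂ i = i := fun i hi =>
    Equiv.Perm.ofSubtype_apply_of_not_mem (π.subtypePerm (p := fun x => ¬ p x) (fun i => (hmem' i).symm)) (not_not_intro hi)
  have hρ₁a : ∀ i, p i → ρ₁ i = ρ i := fun i hi =>
    Equiv.Perm.ofSubtype_apply_of_mem _ hi
  have hρ₁a' : ∀ i, ¬ p i → ρ₁ i = i := fun i hi =>
    Equiv.Perm.ofSubtype_apply_of_not_mem _ hi
  have hρ₂a : ∀ i, ¬ p i → ρ₂ i = ρ i := fun i hi =>
    Equiv.Perm.ofSubtype_apply_of_mem (ρ.subtypePerm (p := fun x => ¬ p x) (fun i => (hmemρ' i).symm)) hi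
  have hρ₂a' : ∀ i, p i → ρ₂ i = i := fun i hi =>
    Equiv.Perm.ofSubtype_apply_of_not_mem (ρ.subtypePerm (p := fun x => ¬ p x) (fun i => (hmemρ' i).symm)) (not_not_intro hi)
  have hπsplit : π = π₁ * π₂ := by
    ext x
    symm
    show π₁ (π₂ x) = π x
    by_cases hx : p x
    · rw [hπ₂a' x hx, hπ₁a x hx]
    · rw [hπ₂a x hx, hπ₁a' _ ((hmem' x).mp hx)]
  have hρsplit : ρ = ρ₁ * ρ₂ := by
    ext x
    symm
    show ρ₁ (ρ₂ x) = ρ x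
    by_cases hx : p x
    · rw [hρ₂a' x hx, hρ₁a x hx]
    · rw [hρ₂a x hx, hρ₁a' _ ((hmemρ' x).mp hx)]
  have hd₁ : Equiv.Perm.Disjoint π₁ π₂ := by
    intro x
    by_cases hx : p x
    · exact Or.inr (hπ₂a' x hx)
    · exact Or.inl (hπ₁a' x hx)
  have hd₂ : Equiv.Perm.Disjoint ρ₁ ρ₂ := by
    intro x
    by_cases hx : p x
    · exact Or.inr (hρ₂a' x hx)
    · exact Or.inl (hρ₁a' x hx)
  have he₁ : ρ₁ = π₁ := by
    ext x
    by_cases hx : p x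
    · rw [hρ₁a x hx, hπ₁a x hx, hρp x hx]
    · rw [hρ₁a' x hx, hπ₁a' x hx]
  have he₂ : ρ₂ = π₂⁻¹ := by
    ext x
    by_cases hx : p x
    · rw [hρ₂a' x hx]
      exact (Equiv.Perm.eq_inv_iff_eq).mpr (hπ₂a' x hx)
    · rw [hρ₂a x hx, hρp' x hx]
      have hx' : ¬ p (π⁻¹ x) := fun hh => hx ((hmeminv x).mp hh)
      have hfin : π₂ (π⁻¹ x) = x := by rw [hπ₂a _ hx', show π (π⁻¹ x) = x from π.apply_symm_apply x]
      exact (Equiv.Perm.eq_inv_iff_eq).mpr hfin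
  rw [hπsplit, hρsplit, hd₂.cycleType_mul, hd₁.cycleType_mul, he₁, he₂,
    Equiv.Perm.cycleType_inv]

lemma cycleType_permCongr' {m m' : Type*} [Fintype m] [DecidableEq m] [Fintype m']
    [DecidableEq m'] (e : m ≃ m') (π : Equiv.Perm m) :
    (e.permCongr π).cycleType = π.cycleType := by
  classical
  have h : e.permCongr π = π.extendDomain (e.trans (Equiv.subtypeUnivEquiv
      (fun _ => trivial : ∀ x : m', (fun _ => True) x)).symm) := by
    ext x
    rw [Equiv.Perm.extendDomain_apply_subtype _ _ trivial]
    simp [Equiv.permCongr_apply]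
  rw [h, Equiv.Perm.cycleType_extendDomain]

lemma cycleType_sumCongr {m₁ m₂ : Type*} [Fintype m₁] [DecidableEq m₁] [Fintype m₂]
    [DecidableEq m₂] (π₁ : Equiv.Perm m₁) (π₂ : Equiv.Perm m₂) :
    Equiv.Perm.cycleType (Equiv.sumCongr π₁ π₂) = π₁.cycleType + π₂.cycleType := by
  classical
  set eL : m₁ ≃ {x : m₁ ⊕ m₂ // x.isLeft = true} :=
    ⟨fun a => ⟨Sum.inl a, rfl⟩,
     fun x => match x with
       | ⟨Sum.inl a, _⟩ => a
       | ⟨Sum.inr b, hb⟩ => absurd hb (by simp),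
     fun a => rfl,
     fun x => match x with
       | ⟨Sum.inl a, _⟩ => rfl
       | ⟨Sum.inr b, hb⟩ => absurd hb (by simp)⟩ with heL
  set eR : m₂ ≃ {x : m₁ ⊕ m₂ // x.isRight = true} :=
    ⟨fun a => ⟨Sum.inr a, rfl⟩,
     fun x => match x with
       | ⟨Sum.inr a, _⟩ => a
       | ⟨Sum.inl b, hb⟩ => absurd hb (by simp),
     fun a => rfl,
     fun x => match x with
       | ⟨Sum.inr a, _⟩ => rfl
       | ⟨Sum.inl b, hb⟩ => absurd hb (by simp)⟩ with heR
  have hL : (Equiv.sumCongr π₁ (1 : Equiv.Perm m₂)) = π₁.extendDomain eL := by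
    ext x
    cases x with
    | inl a =>
      rw [show (Sum.inl a : m₁ ⊕ m₂) = ((eL a : {x : m₁ ⊕ m₂ // x.isLeft = true}) : m₁ ⊕ m₂)
        from rfl, Equiv.Perm.extendDomain_apply_image]
      rfl
    | inr b =>
      rw [Equiv.Perm.extendDomain_apply_not_subtype _ _ (by simp)]
      rfl
  have hR : (Equiv.sumCongr (1 : Equiv.Perm m₁) π₂) = π₂.extendDomain eR := by
    ext x
    cases x with
    | inr a =>
      rw [show (Sum.inr a : m₁ ⊕ m₂) = ((eR a : {x : m₁ ⊕ m₂ // x.isRight = true}) : m₁ ⊕ m₂)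
        from rfl, Equiv.Perm.extendDomain_apply_image]
      rfl
    | inl b =>
      rw [Equiv.Perm.extendDomain_apply_not_subtype _ _ (by simp)]
      rfl
  have hmul : (Equiv.sumCongr π₁ π₂ : Equiv.Perm (m₁ ⊕ m₂)) =
      Equiv.sumCongr π₁ (1 : Equiv.Perm m₂) * Equiv.sumCongr (1 : Equiv.Perm m₁) π₂ := by
    ext x
    cases x <;> rfl
  have hdisj : Equiv.Perm.Disjoint (Equiv.sumCongr π₁ (1 : Equiv.Perm m₂))
      (Equiv.sumCongr (1 : Equiv.Perm m₁) π₂) := by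
    intro x
    cases x with
    | inl a => exact Or.inr rfl
    | inr b => exact Or.inl rfl
  rw [hmul, hdisj.cycleType_mul, hL, hR, Equiv.Perm.cycleType_extendDomain,
    Equiv.Perm.cycleType_extendDomain]

private def sN (K p : ℕ) : ℕ := if 2*p < K then 2*p else 2*K-1-2*p
private def tN (K q : ℕ) : ℕ := if q = 0 then 0 else if 2*q-1 < K then 2*q-1 else 2*K-2*q

private def sFun (K : ℕ) : Fin K → Fin K := fun x =>
  ⟨sN K x, by have := x.isLt; unfold sN; split_ifs <;> omega⟩
private def tFun (K : ℕ) : Fin K → Fin K := fun x =>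
  ⟨tN K x, by have := x.isLt; unfold tN; split_ifs <;> omega⟩

private lemma sFun_inj (K : ℕ) : Function.Injective (sFun K) := by
  rintro ⟨p, hp⟩ ⟨p', hp'⟩ h
  simp only [sFun, Fin.mk.injEq] at h ⊢
  unfold sN at h
  split_ifs at h <;> omega

private lemma tFun_inj (K : ℕ) : Function.Injective (tFun K) := by
  rintro ⟨q, hq⟩ ⟨q', hq'⟩ h
  simp only [tFun, Fin.mk.injEq] at h ⊢
  unfold tN at h
  split_ifs at h <;> omega

lemma pathMat_pair (k : ℕ) :
    ∃ α β : Equiv.Perm (Fin (k+1)), pathMat (k+1) = pairMat α β ∧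
      (β⁻¹ * α).cycleType = if k = 0 then 0 else {k+1} := by
  set K := k + 1 with hK
  set ρ : Equiv.Perm (Fin K) := Equiv.ofBijective (sFun K)
    ((Fintype.bijective_iff_injective_and_card _).mpr ⟨sFun_inj K, rfl⟩) with hρ
  set κ : Equiv.Perm (Fin K) := Equiv.ofBijective (tFun K)
    ((Fintype.bijective_iff_injective_and_card _).mpr ⟨tFun_inj K, rfl⟩) with hκ
  have key : ∀ p q : Fin K, pathMat K (ρ p) (κ q) =
      (if q = p then 1 else 0) + (if q = p + 1 then 1 else 0) := by
    rintro ⟨p, hp⟩ ⟨q, hq⟩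
    have hadd : (((⟨p, hp⟩ : Fin K) + 1 : Fin K) : ℕ) = if p + 1 = K then 0 else p + 1 := by
      have hiff : ((⟨p, hp⟩ : Fin K) = Fin.last k) ↔ (p + 1 = K) := by
        rw [Fin.ext_iff]
        simp only [Fin.val_last]
        omega
      rw [Fin.val_add_one, if_congr hiff rfl rfl]
    have hρv : (ρ ⟨p, hp⟩ : ℕ) = sN K p := rfl
    have hκv : (κ ⟨q, hq⟩ : ℕ) = tN K q := rfl
    have hs : (2*p < K ∧ sN K p = 2*p) ∨ (2*p ≥ K ∧ sN K p = 2*K-1-2*p) := by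
      unfold sN; split_ifs with h
      · exact Or.inl ⟨h, rfl⟩
      · exact Or.inr ⟨by omega, rfl⟩
    have ht : (q = 0 ∧ tN K q = 0) ∨ (q ≠ 0 ∧ 2*q-1 < K ∧ tN K q = 2*q-1) ∨
        (q ≠ 0 ∧ 2*q-1 ≥ K ∧ tN K q = 2*K-2*q) := by
      unfold tN; split_ifs with h h'
      · exact Or.inl ⟨h, rfl⟩
      · exact Or.inr (Or.inl ⟨h, h', rfl⟩)
      · exact Or.inr (Or.inr ⟨h, by omega, rfl⟩)
    have ha : (p+1 = K ∧ (if p + 1 = K then 0 else p + 1) = 0) ∨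
        (p+1 ≠ K ∧ (if p + 1 = K then 0 else p + 1) = p+1) := by
      split_ifs with h
      · exact Or.inl ⟨h, rfl⟩
      · exact Or.inr ⟨h, rfl⟩
    simp only [pathMat, Fin.ext_iff, hρv, hκv, hadd]
    split_ifs <;> omega
  refine ⟨κ * ρ⁻¹, κ * (finRotate K) * ρ⁻¹, ?_, ?_⟩
  · ext i j
    have h1 : pathMat K i j = pathMat K (ρ (ρ⁻¹ i)) (κ (κ⁻¹ j)) := by simp
    rw [h1, key]
    simp only [pairMat, Equiv.Perm.mul_apply]
    congr 1
    · congr 1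
      rw [eq_iff_iff, Equiv.Perm.inv_eq_iff_eq]
    · congr 1
      rw [eq_iff_iff, Equiv.Perm.inv_eq_iff_eq,
        show (finRotate K) (ρ⁻¹ i) = ρ⁻¹ i + 1 from finRotate_succ_apply _]
  · have hsimp : (κ * (finRotate K) * ρ⁻¹)⁻¹ * (κ * ρ⁻¹) =
        ρ * ((finRotate K)⁻¹ * ρ⁻¹) := by group
    rw [hsimp, show ρ * ((finRotate K)⁻¹ * ρ⁻¹) = ρ * (finRotate K)⁻¹ * ρ⁻¹ by group,
      Equiv.Perm.cycleType_conj, Equiv.Perm.cycleType_inv]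
    rcases Nat.eq_zero_or_pos k with rfl | hk
    · rw [if_pos rfl]
      have h1 : (finRotate K : Equiv.Perm (Fin K)) = 1 := by
        ext x
        have hx := x.isLt
        have hy := ((finRotate K) x).isLt
        simp only [hK] at hx hy ⊢
        omega
      rw [h1, Equiv.Perm.cycleType_one]
    · rw [if_neg (by omega), _root_.cycleType_finRotate_of_le (by omega)]

lemma fromBlocks_pairMat {m₁ m₂ : Type*} [DecidableEq m₁] [DecidableEq m₂]
    (α₁ β₁ : Equiv.Perm m₁) (α₂ β₂ : Equiv.Perm m₂) :
    Matrix.fromBlocks (pairMat α₁ β₁) 0 0 (pairMat α₂ β₂) =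
      pairMat (Equiv.sumCongr α₁ α₂) (Equiv.sumCongr β₁ β₂) := by
  ext i j
  cases i <;> cases j <;>
    simp [pairMat, Matrix.fromBlocks, Equiv.sumCongr_apply, Sum.map]

lemma pairMat_submatrix {m m' : Type*} [DecidableEq m] [DecidableEq m'] (e : m' ≃ m)
    (α β : Equiv.Perm m) :
    (pairMat α β).submatrix ⇑e ⇑e =
      pairMat (e.symm.permCongr α) (e.symm.permCongr β) := by
  ext i j
  simp only [Matrix.submatrix_apply, pairMat, Equiv.permCongr_apply, Equiv.symm_symm]
  congr 1 <;> congr 1 <;> rw [eq_iff_iff] <;> constructor <;> intro hh <;>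
    first
    | (rw [← hh]; simp)
    | (rw [hh]; simp)

lemma permCongr_group {m m' : Type*} (e : m ≃ m') (a b : Equiv.Perm m) :
    (e.permCongr b)⁻¹ * (e.permCongr a) = e.permCongr (b⁻¹ * a) := by
  have hinv : (e.permCongr b)⁻¹ = e.permCongr b⁻¹ := by
    apply inv_eq_of_mul_eq_one_right
    ext x
    simp [Equiv.permCongr_apply, Equiv.Perm.mul_apply]
  rw [hinv]
  ext x
  simp [Equiv.permCongr_apply, Equiv.Perm.mul_apply]

lemma sumCongr_group {m₁ m₂ : Type*} (a₁ b₁ : Equiv.Perm m₁) (a₂ b₂ : Equiv.Perm m₂) :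
    (Equiv.sumCongr b₁ b₂ : Equiv.Perm (m₁ ⊕ m₂))⁻¹ * Equiv.sumCongr a₁ a₂ =
      Equiv.sumCongr (b₁⁻¹ * a₁) (b₂⁻¹ * a₂) := by
  ext x
  cases x <;> rfl

lemma listMat_pair : ∀ (L : List ℕ), (∀ x ∈ L, 0 < x) →
    ∃ α β : Equiv.Perm (Fin L.sum), listMat L = pairMat α β ∧
      (β⁻¹ * α).cycleType = ↑(L.filter (fun x => 2 ≤ x))
  | [], _ => by
    refine ⟨1, 1, ?_, by simp only [inv_one, mul_one, Equiv.Perm.cycleType_one] <;> rfl⟩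
    ext i j
    exact i.elim0
  | k :: L, hpos => by
    obtain ⟨k', rfl⟩ : ∃ k', k = k' + 1 :=
      ⟨k - 1, by have := hpos k (by simp); omega⟩
    obtain ⟨α₁, β₁, hM₁, hct₁⟩ := pathMat_pair k'
    obtain ⟨α₂, β₂, hM₂, hct₂⟩ := listMat_pair L (fun x hx => hpos x (by simp [hx]))
    set E : Fin (((k' + 1) :: L).sum) ≃ ((Fin (k'+1)) ⊕ (Fin L.sum)) :=
      (finCongr List.sum_cons).trans finSumFinEquiv.symm with hE
    have hstep : listMat ((k' + 1) :: L) =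
        (Matrix.fromBlocks (pathMat (k'+1)) 0 0 (listMat L)).submatrix ⇑E ⇑E := rfl
    refine ⟨E.symm.permCongr (Equiv.sumCongr α₁ α₂), E.symm.permCongr (Equiv.sumCongr β₁ β₂),
      ?_, ?_⟩
    · rw [hstep, hM₁, hM₂, fromBlocks_pairMat, pairMat_submatrix]
    · rw [permCongr_group, cycleType_permCongr', sumCongr_group, cycleType_sumCongr,
        hct₁, hct₂]
      rw [List.filter_cons]
      rcases Nat.eq_zero_or_pos k' with rfl | hk'
      · rw [if_pos rfl, zero_add, if_neg (by norm_num)]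
      · rw [if_neg (by omega), if_pos (by simp only [decide_eq_true_eq]; omega),
          ← Multiset.cons_coe, Multiset.singleton_add]

def permPart {n : ℕ} (π : Equiv.Perm (Fin n)) : n.Partition where
  parts := π.cycleType + Multiset.replicate (n - π.cycleType.sum) 1
  parts_pos := by
    intro i hi
    rcases Multiset.mem_add.mp hi with h | h
    · have := Equiv.Perm.two_le_of_mem_cycleType h
      omega
    · rw [Multiset.eq_of_mem_replicate h]
      norm_num
  parts_sum := by
    have h1 : π.cycleType.sum ≤ n := by
      rw [Equiv.Perm.sum_cycleType]
      have := Finset.card_le_univ π.support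
      simpa using this
    rw [Multiset.sum_add, Multiset.sum_replicate, smul_eq_mul, mul_one]
    omega

lemma permPart_filter {n : ℕ} (π : Equiv.Perm (Fin n)) :
    (permPart π).parts.filter (fun x => 2 ≤ x) = π.cycleType := by
  show (π.cycleType + Multiset.replicate (n - π.cycleType.sum) 1).filter _ = _
  rw [Multiset.filter_add,
    Multiset.filter_eq_self.mpr (fun a ha => Equiv.Perm.two_le_of_mem_cycleType ha),
    Multiset.filter_eq_nil.mpr (fun a ha => by rw [Multiset.eq_of_mem_replicate ha]; omega),
    add_zero]

lemma permPart_congr {n : ℕ} {π π' : Equiv.Perm (Fin n)}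
    (h : π.cycleType = π'.cycleType) : permPart π = permPart π' := by
  have : (permPart π).parts = (permPart π').parts := by
    show π.cycleType + _ = π'.cycleType + _
    rw [h]
  exact Nat.Partition.ext this

lemma multiset_decomp (m : Multiset ℕ) (hpos : ∀ x ∈ m, 0 < x) :
    m.filter (fun x => 2 ≤ x) +
      Multiset.replicate (m.sum - (m.filter (fun x => 2 ≤ x)).sum) 1 = m := by
  classical
  have hsplit := Multiset.filter_add_not (fun x => 2 ≤ x) m
  have hones : m.filter (fun x => ¬ 2 ≤ x) =
      Multiset.replicate (Multiset.card (m.filter (fun x => ¬ 2 ≤ x))) 1 := by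
    rw [Multiset.eq_replicate_card]
    intro x hx
    have h1 := (Multiset.mem_filter.mp hx).1
    have h2 := (Multiset.mem_filter.mp hx).2
    have := hpos x h1
    omega
  have hsum : m.sum = (m.filter (fun x => 2 ≤ x)).sum +
      Multiset.card (m.filter (fun x => ¬ 2 ≤ x)) := by
    conv_lhs => rw [← hsplit]
    rw [Multiset.sum_add]
    congr 1
    conv_lhs => rw [hones]
    rw [Multiset.sum_replicate, smul_eq_mul, mul_one]
  rw [hsum, Nat.add_sub_cancel_left, ← hones]
  exact hsplit

lemma canonP_pair {n : ℕ} (μ : n.Partition) :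
    ∃ α β : Equiv.Perm (Fin n), canonP μ = pairMat α β ∧ permPart (β⁻¹ * α) = μ := by
  classical
  set L := μ.parts.toList with hLdef
  have hL : L.sum = n := by rw [hLdef, Multiset.sum_toList, μ.parts_sum]
  obtain ⟨α₀, β₀, hM, hct⟩ := listMat_pair L
    (fun x hx => μ.parts_pos (by rwa [hLdef, Multiset.mem_toList] at hx))
  set e : Fin n ≃ Fin L.sum := finCongr hL.symm with he
  have hcanon : canonP μ = (listMat L).submatrix ⇑e ⇑e := rfl
  refine ⟨e.symm.permCongr α₀, e.symm.permCongr β₀, ?_, ?_⟩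
  · rw [hcanon, hM, pairMat_submatrix]
  · have hct2 : ((e.symm.permCongr β₀)⁻¹ * e.symm.permCongr α₀).cycleType =
        (β₀⁻¹ * α₀).cycleType := by
      rw [permCongr_group, cycleType_permCongr']
    apply Nat.Partition.ext
    show _ + _ = μ.parts
    rw [hct2, hct]
    have hfilt : (↑(L.filter (fun x => 2 ≤ x)) : Multiset ℕ) =
        μ.parts.filter (fun x => 2 ≤ x) := by
      rw [hLdef, ← Multiset.filter_coe, Multiset.coe_toList]
    rw [hfilt]
    have := multiset_decomp μ.parts (fun x hx => μ.parts_pos hx)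
    rw [μ.parts_sum] at this
    exact this

/-- every class in `T(n,2)/∼` decomposes uniquely as a direct sum of
irreducible classes, the irreducible classes of size `k` being represented by `pathMat k`;
equivalently, sending a partition `μ ⊢ n` to the class of the block-diagonal matrix with
blocks `pathMat k` over the parts `k` of `μ` is a bijection from partitions of `n` onto
`T(n,2)/∼`. -/
theorem stmt15 (n : ℕ) (hn : 0 < n) :
    ∃ Φ : n.Partition → {C : Set (Matrix (Fin n) (Fin n) ℕ) //
        ∃ A, (((∀ i, ∑ j, A i j = 2) ∧ (∀ j, ∑ i, A i j = 2)) ∧ permEquiv A Aᵀ) ∧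
          C = {B | permEquiv A B}},
      Function.Bijective Φ ∧ ∀ μ : n.Partition, canonP μ ∈ (Φ μ : Set _) := by
  classical
  have prop : ∀ μ : n.Partition, ((∀ i, ∑ j, canonP μ i j = 2) ∧
      (∀ j, ∑ i, canonP μ i j = 2)) ∧ permEquiv (canonP μ) (canonP μ)ᵀ := by
    intro μ
    obtain ⟨α, β, hM, _⟩ := canonP_pair μ
    refine ⟨⟨?_, ?_⟩, ?_⟩
    · intro i; rw [hM]; exact pairMat_rowSum α β i
    · intro j; rw [hM]; exact pairMat_colSum α β j
    · rw [hM, pairMat_transpose]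
      apply pairMat_permEquiv_of_isConj
      rw [Equiv.Perm.isConj_iff_cycleType_eq]
      have h1 : (β⁻¹)⁻¹ * α⁻¹ = (α * β⁻¹)⁻¹ := by group
      rw [h1, Equiv.Perm.cycleType_inv,
        show α * β⁻¹ = α * (β⁻¹ * α) * α⁻¹ by group, Equiv.Perm.cycleType_conj]
  refine ⟨fun μ => ⟨{B | permEquiv (canonP μ) B}, canonP μ, prop μ, rfl⟩, ⟨?_, ?_⟩,
    fun μ => permEquiv_refl _⟩
  · -- injectivity
    intro μ ν h
    have hsets : {B | permEquiv (canonP μ) B} = {B | permEquiv (canonP ν) B} :=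
      congrArg Subtype.val h
    have hequiv : permEquiv (canonP μ) (canonP ν) := by
      have hmem : canonP ν ∈ {B | permEquiv (canonP ν) B} := permEquiv_refl _
      rw [← hsets] at hmem
      exact hmem
    obtain ⟨α, β, hM, hP⟩ := canonP_pair μ
    obtain ⟨α', β', hM', hP'⟩ := canonP_pair ν
    rw [hM, hM'] at hequiv
    obtain ⟨γ, δ, hBeq, hctc⟩ := permEquiv_pairMat_form hequiv
    have huni : (δ⁻¹ * γ).cycleType = (β'⁻¹ * α').cycleType :=
      pairMat_cycleType_unique hBeq
    have hcteq : (β'⁻¹ * α').cycleType = (β⁻¹ * α).cycleType := by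
      rw [← huni, hctc]
    rw [← hP, ← hP']
    exact (permPart_congr hcteq).symm
  · -- surjectivity
    rintro ⟨C, A, ⟨⟨hr, hc⟩, hsym⟩, rfl⟩
    obtain ⟨α, β, rfl⟩ := exists_pairMat hr hc
    refine ⟨permPart (β⁻¹ * α), Subtype.ext ?_⟩
    obtain ⟨α', β', hM', hP'⟩ := canonP_pair (permPart (β⁻¹ * α))
    have hct : (β'⁻¹ * α').cycleType = (β⁻¹ * α).cycleType := by
      rw [← permPart_filter (β'⁻¹ * α'), ← permPart_filter (β⁻¹ * α), hP']
    have hpe : permEquiv (pairMat α β) (canonP (permPart (β⁻¹ * α))) := by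
      rw [hM']
      exact pairMat_permEquiv_of_isConj (Equiv.Perm.isConj_iff_cycleType_eq.mpr hct.symm)
    show {B | permEquiv (canonP (permPart (β⁻¹ * α))) B} = {B | permEquiv (pairMat α β) B}
    ext B
    simp only [Set.mem_setOf_eq]
    constructor
    · intro hB
      exact permEquiv_trans hpe hB
    · intro hB
      exact permEquiv_trans (permEquiv_symm hpe) hB
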